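/- Assume R is a principal ideal domain and let (c,d) ∈ S with c ≠ 0. Then V_{c,d} ∩ F is compact. -/

import Mathlib

noncomputable section

open scoped Classical
open MeasureTheory

namespace Hilbert

/-- `k₀ = 2` if `k ≡ 1 (mod 4)` and `k₀ = 1` otherwise. -/
def k0 (k : ℕ) : ℝ := if k % 4 = 1 then 2 else 1

/-- `ω = (1 + √k)/k₀`. -/
def omg (k : ℕ) : ℝ := (1 + Real.sqrt k) / k0 k

/-- `ω' = (1 - √k)/k₀`, the algebraic conjugate of `ω`. -/
def omg' (k : ℕ) : ℝ := (1 - Real.sqrt k) / k0 k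

/-- The ring `R = ℤ[ω]`, realized inside `ℝ × ℝ` via the pair of real embeddings
`α ↦ (α, α')` of `K = ℚ(√k)`. -/
def R (k : ℕ) : Subring (ℝ × ℝ) := Subring.closure {(omg k, omg' k)}

/-- The ambient space `ℝ⁴`, with coordinates `(x₁, x₂, y₁, y₂)`. -/
abbrev Pt : Type := ℝ × ℝ × ℝ × ℝ

def x1 (p : Pt) : ℝ := p.1
def x2 (p : Pt) : ℝ := p.2.1
def y1 (p : Pt) : ℝ := p.2.2.1
def y2 (p : Pt) : ℝ := p.2.2.2

/-- `H² × H²`, identified with an open subset of `ℝ⁴`. -/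
def HH : Set Pt := {p | 0 < y1 p ∧ 0 < y2 p}

/-- The coordinate `s₁`, determined by `x₁ = s₁ + s₂ ω`, `x₂ = s₁ + s₂ ω'`. -/
def s1 (k : ℕ) (p : Pt) : ℝ := (omg' k * x1 p - omg k * x2 p) / (omg' k - omg k)

/-- The coordinate `s₂`. -/
def s2 (k : ℕ) (p : Pt) : ℝ := (x1 p - x2 p) / (omg k - omg' k)

/-- The ratio `r = y₁/y₂`. -/
def rr (p : Pt) : ℝ := y1 p / y2 p

/-- The height `h = y₁ y₂`. -/
def hh (p : Pt) : ℝ := y1 p * y2 p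

/-- `‖cZ+d‖ = ((cx₁+d)² + c²y₁²)((c'x₂+d')² + c'²y₂²)`, where `c = (c, c')`, `d = (d, d')`
are given by their two real embeddings. -/
def HNorm (c d : ℝ × ℝ) (p : Pt) : ℝ :=
  ((c.1 * x1 p + d.1) ^ 2 + c.1 ^ 2 * y1 p ^ 2) *
    ((c.2 * x2 p + d.2) ^ 2 + c.2 ^ 2 * y2 p ^ 2)

/-- `S = {(c,d) ∈ R² : cR + dR = R}`. -/
def Spairs (k : ℕ) : Set (R k × R k) := {cd | Ideal.span {cd.1, cd.2} = ⊤}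

/-- `V_{c,d}^≥ = {Z ∈ H²×H² : ‖cZ+d‖ ≥ 1}`. -/
def Vge (k : ℕ) (cd : R k × R k) : Set Pt :=
  {p ∈ HH | 1 ≤ HNorm (cd.1 : ℝ × ℝ) (cd.2 : ℝ × ℝ) p}

/-- `V_{c,d}^≤ = {Z ∈ H²×H² : ‖cZ+d‖ ≤ 1}`. -/
def Vle (k : ℕ) (cd : R k × R k) : Set Pt :=
  {p ∈ HH | HNorm (cd.1 : ℝ × ℝ) (cd.2 : ℝ × ℝ) p ≤ 1}

/-- `V_{c,d} = {Z ∈ H²×H² : ‖cZ+d‖ = 1}`. -/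
def Veq (k : ℕ) (cd : R k × R k) : Set Pt :=
  {p ∈ HH | HNorm (cd.1 : ℝ × ℝ) (cd.2 : ℝ × ℝ) p = 1}

/-- `F₀ = {Z ∈ H²×H² : ‖cZ+d‖ ≥ 1 for all (c,d) ∈ S}`. -/
def F0 (k : ℕ) : Set Pt :=
  {p ∈ HH | ∀ cd ∈ Spairs k, 1 ≤ HNorm (cd.1 : ℝ × ℝ) (cd.2 : ℝ × ℝ) p}

/-- `F_∞ = {(s₁,s₂,r,h) : |s₁| ≤ 1/2, |s₂| ≤ 1/2, ε₀⁻² ≤ r ≤ ε₀²}`, where `ε` stands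
for the fundamental unit `ε₀`. -/
def FInf (k : ℕ) (ε : ℝ) : Set Pt :=
  {p ∈ HH | |s1 k p| ≤ 1 / 2 ∧ |s2 k p| ≤ 1 / 2 ∧ (ε ^ 2)⁻¹ ≤ rr p ∧ rr p ≤ ε ^ 2}

/-- `F = F_∞ ∩ F₀`. -/
def F (k : ℕ) (ε : ℝ) : Set Pt := FInf k ε ∩ F0 k

/-- `SL₂(R)`. -/
abbrev SL (k : ℕ) := Matrix.SpecialLinearGroup (Fin 2) (R k)

/-- Möbius action on the upper half-plane: image of `x + y i` under `(a b; c d)`. -/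
def moeb (a b c d x y : ℝ) : ℝ × ℝ :=
  (((a * x + b) * (c * x + d) + a * c * y ^ 2) / ((c * x + d) ^ 2 + c ^ 2 * y ^ 2),
    y / ((c * x + d) ^ 2 + c ^ 2 * y ^ 2))

/-- The action of `γ ∈ SL₂(R)` on `H²×H²`: `γ` acts on the first factor through the first
embedding and through the conjugate matrix `γ'` (second embedding) on the second factor.
This descends to the Hilbert modular group `PSL₂(R)`. -/
def act (k : ℕ) (g : SL k) (p : Pt) : Pt :=
  ((moeb (g.1 0 0 : ℝ × ℝ).1 (g.1 0 1 : ℝ × ℝ).1 (g.1 1 0 : ℝ × ℝ).1 (g.1 1 1 : ℝ × ℝ).1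
      (x1 p) (y1 p)).1,
   (moeb (g.1 0 0 : ℝ × ℝ).2 (g.1 0 1 : ℝ × ℝ).2 (g.1 1 0 : ℝ × ℝ).2 (g.1 1 1 : ℝ × ℝ).2
      (x2 p) (y2 p)).1,
   (moeb (g.1 0 0 : ℝ × ℝ).1 (g.1 0 1 : ℝ × ℝ).1 (g.1 1 0 : ℝ × ℝ).1 (g.1 1 1 : ℝ × ℝ).1
      (x1 p) (y1 p)).2,
   (moeb (g.1 0 0 : ℝ × ℝ).2 (g.1 0 1 : ℝ × ℝ).2 (g.1 1 0 : ℝ × ℝ).2 (g.1 1 1 : ℝ × ℝ).2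
      (x2 p) (y2 p)).2)

/-- The pair of real embeddings of a unit of `R`. -/
def unitVal (k : ℕ) (u : (R k)ˣ) : ℝ × ℝ := ((u : R k) : ℝ × ℝ)

/-- `e` is the fundamental unit of `R`: the smallest unit of `R` greater than `1`
(with respect to the first embedding). -/
def IsFundUnit (k : ℕ) (e : (R k)ˣ) : Prop :=
  1 < (unitVal k e).1 ∧
    ∀ v : (R k)ˣ, 1 < (unitVal k v).1 → (unitVal k e).1 ≤ (unitVal k v).1

/-- The real number `ε₀ > 1`, the fundamental unit under the first embedding. -/
def eps (k : ℕ) (e : (R k)ˣ) : ℝ := (unitVal k e).1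


/-- The norm `N(c) = c c'` of an element of `R` (as a real number). -/
def Nm (k : ℕ) (c : R k) : ℝ := ((c : ℝ × ℝ)).1 * ((c : ℝ × ℝ)).2

/-- A subset `C` of `H²×H²` is hyperbolically bounded if it is bounded in the
Euclidean metric and `y₁, y₂ > ε` on `C` for some `ε > 0`. -/
def HypBounded (C : Set Pt) : Prop :=
  C ⊆ HH ∧ Bornology.IsBounded C ∧ ∃ ε > (0 : ℝ), ∀ p ∈ C, ε < y1 p ∧ ε < y2 p

/-- `V_{C,μ} = {(c,d) ∈ R × R : ‖cZ+d‖ ≤ μ for some Z ∈ C}`. -/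
def VCmu (k : ℕ) (C : Set Pt) (μ : ℝ) : Set (R k × R k) :=
  {cd | ∃ p ∈ C, HNorm (cd.1 : ℝ × ℝ) (cd.2 : ℝ × ℝ) p ≤ μ}

/-- The conditions (8) of Theorem `FiniteSides` on a pair `(c,d) ∈ R²`. -/
def SCond (k : ℕ) (ε : ℝ) (cd : R k × R k) : Prop :=
  cd.1 ≠ 0 ∧ Ideal.span {cd.1, cd.2} = ⊤ ∧
    |Nm k cd.1| ≤ 2 * k / (k0 k) ^ 2 ∧
    |((cd.2 : ℝ × ℝ)).1 / ((cd.1 : ℝ × ℝ)).1| <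
      ε * Real.sqrt (2 * k / (Nm k cd.1 ^ 2 * (k0 k) ^ 2) - (k0 k) ^ 2 / (2 * k)) +
        (1 + omg k) / 2 ∧
    |((cd.2 : ℝ × ℝ)).2 / ((cd.1 : ℝ × ℝ)).2| <
      ε * Real.sqrt (2 * k / (Nm k cd.1 ^ 2 * (k0 k) ^ 2) - (k0 k) ^ 2 / (2 * k)) +
        (1 - omg' k) / 2

/-- `S₁` is a set of representatives, up to multiplication by units of `R`, of the pairs
`(c,d) ∈ R²` satisfying the conditions `SCond`. -/
def IsRepSet (k : ℕ) (ε : ℝ) (S1 : Set (R k × R k)) : Prop :=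
  (∀ cd ∈ S1, SCond k ε cd) ∧
    (∀ cd : R k × R k, SCond k ε cd →
      ∃ ab ∈ S1, ∃ u : (R k)ˣ, cd.1 = (u : R k) * ab.1 ∧ cd.2 = (u : R k) * ab.2) ∧
    (∀ ab ∈ S1, ∀ ab' ∈ S1,
      (∃ u : (R k)ˣ, ab'.1 = (u : R k) * ab.1 ∧ ab'.2 = (u : R k) * ab.2) → ab = ab')

/-- The family `𝒱_∞ = {V_i^± : i = 1,2,3}`. -/
def VfamInf (k : ℕ) (ε : ℝ) : Set (Set Pt) :=
  { {p ∈ HH | s1 k p = 1 / 2}, {p ∈ HH | s1 k p = -(1 / 2)},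
    {p ∈ HH | s2 k p = 1 / 2}, {p ∈ HH | s2 k p = -(1 / 2)},
    {p ∈ HH | rr p = ε ^ 2}, {p ∈ HH | rr p = (ε ^ 2)⁻¹} }

/-- The family `𝒱 = {V_{c,d} : (c,d) ∈ S, c ≠ 0}`. -/
def Vfam (k : ℕ) : Set (Set Pt) :=
  {V | ∃ cd ∈ Spairs k, cd.1 ≠ 0 ∧ V = Veq k cd}

/-- The family `𝓜 = {γ(M) : γ ∈ Γ, M ∈ 𝒱 ∪ 𝒱_∞}`. -/
def Mfam (k : ℕ) (ε : ℝ) : Set (Set Pt) :=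
  {M | ∃ g : SL k, ∃ V ∈ Vfam k ∪ VfamInf k ε, M = act k g '' V}

/-- `ω` as an element of `R`. -/
def omR (k : ℕ) : R k := ⟨(omg k, omg' k), Subring.subset_closure rfl⟩

/-- The side-pairing transformations: `γ ≠ 1` (in `PSL₂(R)`) such that `F ∩ γ⁻¹(F)` has
Hausdorff dimension `3`. -/
def SidePairings (k : ℕ) (ε : ℝ) : Set (SL k) :=
  {g | g ≠ 1 ∧ g.1 ≠ -1 ∧ dimH (F k ε ∩ act k g⁻¹ '' F k ε) = 3}


section AuxProofs

variable {k : ℕ}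

/-- trace as an integer -/
def tt (k : ℕ) : ℤ := if k % 4 = 1 then 1 else 2
/-- norm of ω as an integer -/
def nn (k : ℕ) : ℤ := if k % 4 = 1 then (1 - (k:ℤ)) / 4 else 1 - (k:ℤ)

variable {k : ℕ}

lemma one_lt_sqrtk (hk1 : 1 < k) : 1 < Real.sqrt k := by
  have : (1:ℝ) < (k:ℝ) := by exact_mod_cast hk1
  nlinarith [Real.sq_sqrt (by positivity : (0:ℝ) ≤ (k:ℝ)), Real.sqrt_nonneg (k:ℝ)]

lemma one_lt_omg (hk1 : 1 < k) : 1 < omg k := by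
  have h := one_lt_sqrtk hk1
  unfold omg k0; split <;> norm_num <;> linarith

lemma omg'_neg (hk1 : 1 < k) : omg' k < 0 := by
  have h := one_lt_sqrtk hk1
  unfold omg' k0; split <;> norm_num <;> linarith

lemma neg_omg'_lt_omg (hk1 : 1 < k) : -omg' k < omg k := by
  have h := one_lt_sqrtk hk1
  unfold omg omg' k0; split <;> norm_num <;> linarith

lemma omg_sub_pos (hk1 : 1 < k) : 0 < omg k - omg' k := by
  have h1 := one_lt_omg hk1; have h2 := omg'_neg (k := k) hk1; linarith

lemma tt_eq (k : ℕ) : (tt k : ℝ) = 2 / k0 k := by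
  unfold tt k0; split <;> norm_num

lemma four_dvd (h : k % 4 = 1) : (4:ℤ) ∣ (1 - (k:ℤ)) := by omega

lemma nn_eq (k : ℕ) : (nn k : ℝ) = (1 - (k:ℝ)) / (k0 k) ^ 2 := by
  unfold nn k0
  by_cases h : k % 4 = 1
  · simp only [h, if_true]
    obtain ⟨j, hj⟩ := four_dvd h
    rw [hj, Int.mul_ediv_cancel_left _ (by norm_num)]
    have : (1:ℝ) - (k:ℝ) = 4 * (j:ℝ) := by exact_mod_cast congrArg (Int.cast : ℤ → ℝ) hj
    rw [this]; norm_num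
  · simp only [h, if_false]; push_cast; norm_num

lemma omg_add_omg' (k : ℕ) : omg k + omg' k = (tt k : ℝ) := by
  rw [tt_eq]; unfold omg omg'
  have h0 : k0 k ≠ 0 := by unfold k0; split <;> norm_num
  field_simp; ring

lemma omg_mul_omg' (k : ℕ) : omg k * omg' k = (nn k : ℝ) := by
  rw [nn_eq]; unfold omg omg'
  have h0 : k0 k ≠ 0 := by unfold k0; split <;> norm_num
  have hs : Real.sqrt k ^ 2 = (k:ℝ) := Real.sq_sqrt (by positivity)
  field_simp; nlinarith [hs]

lemma omg_sq (k : ℕ) : omg k ^ 2 = tt k * omg k - nn k := by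
  have h1 := omg_add_omg' k; have h2 := omg_mul_omg' k
  linear_combination omg k * h1 - h2

lemma omg'_sq (k : ℕ) : omg' k ^ 2 = tt k * omg' k - nn k := by
  have h1 := omg_add_omg' k; have h2 := omg_mul_omg' k
  linear_combination omg' k * h1 - h2


lemma mem_R_char {z : ℝ × ℝ} (hz : z ∈ R k) :
    ∃ a b : ℤ, z = ((a:ℝ) + (b:ℝ) * omg k, (a:ℝ) + (b:ℝ) * omg' k) := by
  induction hz using Subring.closure_induction with
  | mem x hx =>
      rcases hx with rfl
      exact ⟨0, 1, by norm_num⟩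
  | zero => exact ⟨0, 0, by norm_num; rfl⟩
  | one => exact ⟨1, 0, by norm_num; rfl⟩
  | add x y hx hy ihx ihy =>
      obtain ⟨a, b, rfl⟩ := ihx; obtain ⟨a', b', rfl⟩ := ihy
      exact ⟨a + a', b + b', by push_cast; simp [Prod.ext_iff]; constructor <;> ring⟩
  | neg x hx ihx =>
      obtain ⟨a, b, rfl⟩ := ihx
      exact ⟨-a, -b, by push_cast; simp [Prod.ext_iff]; constructor <;> ring⟩
  | mul x y hx hy ihx ihy =>
      obtain ⟨a, b, rfl⟩ := ihx; obtain ⟨a', b', rfl⟩ := ihy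
      refine ⟨a * a' - b * b' * nn k, a * b' + a' * b + b * b' * tt k, ?_⟩
      have h1 := omg_sq k; have h2 := omg'_sq k
      simp only [Prod.mk_mul_mk, Prod.ext_iff]
      constructor <;> push_cast
      · linear_combination ((b:ℝ) * b') * h1
      · linear_combination ((b:ℝ) * b') * h2

lemma mem_R_of (a b : ℤ) : ((a:ℝ) + (b:ℝ) * omg k, (a:ℝ) + (b:ℝ) * omg' k) ∈ R k := by
  have h1 : ((a:ℝ×ℝ) : ℝ × ℝ) ∈ R k := intCast_mem (R k) a
  have h2 : (omg k, omg' k) ∈ R k := Subring.subset_closure rfl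
  have h3 := Subring.add_mem (R k) h1 (Subring.mul_mem (R k) (intCast_mem (R k) b) h2)
  convert h3 using 1
  ext <;> simp

lemma irr_sqrtk (hk : Squarefree k) (hk1 : 1 < k) : Irrational (Real.sqrt k) := by
  rw [irrational_sqrt_natCast_iff]
  rintro ⟨m, hm⟩
  have hu : IsUnit m := hk m (by rw [hm])
  rw [Nat.isUnit_iff] at hu
  rw [hu] at hm
  omega

lemma comb_ne_zero (hk : Squarefree k) (hk1 : 1 < k) (a b : ℤ) (hb : b ≠ 0) :
    (a:ℝ) + (b:ℝ) * omg k ≠ 0 ∧ (a:ℝ) + (b:ℝ) * omg' k ≠ 0 := by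
  have hirr := irr_sqrtk hk hk1
  have h0 : k0 k = 2 ∨ k0 k = 1 := by unfold k0; split <;> simp
  constructor
  · intro h
    unfold omg at h
    rcases h0 with h0 | h0 <;> rw [h0] at h
    · apply hirr
      refine ⟨(-(2 * a + b)) / b, ?_⟩
      have hb' : (b:ℝ) ≠ 0 := by exact_mod_cast hb
      push_cast
      field_simp at h ⊢
      linarith
    · apply hirr
      refine ⟨(-(a + b)) / b, ?_⟩
      have hb' : (b:ℝ) ≠ 0 := by exact_mod_cast hb
      push_cast
      field_simp at h ⊢
      linarith
  · intro h
    unfold omg' at h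
    rcases h0 with h0 | h0 <;> rw [h0] at h
    · apply hirr
      refine ⟨(2 * a + b) / b, ?_⟩
      have hb' : (b:ℝ) ≠ 0 := by exact_mod_cast hb
      push_cast
      field_simp at h ⊢
      linarith
    · apply hirr
      refine ⟨(a + b) / b, ?_⟩
      have hb' : (b:ℝ) ≠ 0 := by exact_mod_cast hb
      push_cast
      field_simp at h ⊢
      linarith

lemma coords_ne_zero (hk : Squarefree k) (hk1 : 1 < k) {z : ℝ × ℝ} (hz : z ∈ R k)
    (h0 : z ≠ 0) : z.1 ≠ 0 ∧ z.2 ≠ 0 := by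
  obtain ⟨a, b, rfl⟩ := mem_R_char hz
  by_cases hb : b = 0
  · subst hb
    have ha : (a:ℝ) ≠ 0 := by
      intro h
      apply h0
      have : (a:ℝ) = 0 := h
      simp [Prod.ext_iff, this]
    constructor <;> simpa using ha
  · exact comb_ne_zero hk hk1 a b hb

lemma norm_int {z : ℝ × ℝ} (hz : z ∈ R k) : ∃ N : ℤ, z.1 * z.2 = (N:ℝ) := by
  obtain ⟨a, b, rfl⟩ := mem_R_char hz
  refine ⟨a ^ 2 + a * b * tt k + b ^ 2 * nn k, ?_⟩
  have h1 := omg_add_omg' k; have h2 := omg_mul_omg' k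
  push_cast
  linear_combination ((a:ℝ) * b) * h1 + ((b:ℝ) ^ 2) * h2

lemma norm_sq_ge_one (hk : Squarefree k) (hk1 : 1 < k) {z : ℝ × ℝ} (hz : z ∈ R k)
    (h0 : z ≠ 0) : 1 ≤ (z.1 * z.2) ^ 2 := by
  obtain ⟨N, hN⟩ := norm_int hz
  have hnz := coords_ne_zero hk hk1 hz h0
  have : (N:ℝ) ≠ 0 := by rw [← hN]; exact mul_ne_zero hnz.1 hnz.2
  have hN0 : N ≠ 0 := by exact_mod_cast this
  have : 1 ≤ |N| := Int.one_le_abs hN0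
  have h1 : (1:ℝ) ≤ |(N:ℝ)| := by exact_mod_cast this
  rw [hN]
  nlinarith [abs_nonneg (N:ℝ), sq_abs (N:ℝ)]


lemma exists_unimodular (hk : Squarefree k) (hk1 : 1 < k)
    (hPID : IsPrincipalIdealRing (R k)) (c d : R k) (hc : c ≠ 0) :
    ∃ g c₀ d₀ : R k, g ≠ 0 ∧ c = g * c₀ ∧ d = g * d₀ ∧ Ideal.span {c₀, d₀} = ⊤ := by
  have hip : (Ideal.span {c, d} : Ideal (R k)).IsPrincipal :=
    IsPrincipalIdealRing.principal _
  set g := Submodule.IsPrincipal.generator (Ideal.span {c, d} : Ideal (R k)) with hgdef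
  have hspan : Ideal.span {g} = Ideal.span {c, d} := Ideal.span_singleton_generator _
  have hcm : c ∈ Ideal.span ({c, d} : Set (R k)) :=
    Ideal.subset_span (Set.mem_insert _ _)
  have hdm : d ∈ Ideal.span ({c, d} : Set (R k)) :=
    Ideal.subset_span (Set.mem_insert_of_mem _ rfl)
  rw [← hspan] at hcm hdm
  obtain ⟨c₀, hc₀⟩ := Ideal.mem_span_singleton.mp hcm
  obtain ⟨d₀, hd₀⟩ := Ideal.mem_span_singleton.mp hdm
  have hg0 : g ≠ 0 := by
    intro h
    apply hc
    rw [hc₀, h, zero_mul]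
  have hgm : g ∈ Ideal.span ({c, d} : Set (R k)) := by
    rw [← hspan]; exact Ideal.subset_span rfl
  obtain ⟨α, β, hαβ⟩ := Ideal.mem_span_pair.mp hgm
  refine ⟨g, c₀, d₀, hg0, hc₀, hd₀, ?_⟩
  rw [Ideal.eq_top_iff_one]
  apply Ideal.mem_span_pair.mpr
  refine ⟨α, β, ?_⟩
  -- from α * (g * c₀) + β * (g * d₀) = g, cancel g using real coordinates
  rw [hc₀, hd₀] at hαβ
  have hvv := congrArg (fun z : R k => ((z : ℝ × ℝ))) hαβ
  push_cast at hvv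
  have hv1 := congrArg Prod.fst hvv
  have hv2 := congrArg Prod.snd hvv
  simp only [Prod.fst_mul, Prod.fst_add, Prod.snd_mul, Prod.snd_add] at hv1 hv2
  have hgne := coords_ne_zero hk hk1 g.2 (by simpa using (Subtype.coe_injective.ne_iff.mpr hg0))
  have hcoe : ((α * c₀ + β * d₀ : R k) : ℝ × ℝ)
      = (α : ℝ×ℝ) * (c₀:ℝ×ℝ) + (β:ℝ×ℝ) * (d₀:ℝ×ℝ) := by push_cast; ring
  have h1 : ((α * c₀ + β * d₀ : R k) : ℝ × ℝ).1 = 1 := by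
    rw [hcoe]
    simp only [Prod.fst_mul, Prod.fst_add]
    apply mul_right_cancel₀ hgne.1
    rw [one_mul]
    linear_combination hv1
  have h2 : ((α * c₀ + β * d₀ : R k) : ℝ × ℝ).2 = 1 := by
    rw [hcoe]
    simp only [Prod.snd_mul, Prod.snd_add]
    apply mul_right_cancel₀ hgne.2
    rw [one_mul]
    linear_combination hv2
  have : ((α * c₀ + β * d₀ : R k) : ℝ × ℝ) = ((1 : R k) : ℝ × ℝ) := by
    have : ((1 : R k) : ℝ × ℝ) = (1 : ℝ × ℝ) := rfl
    rw [this, Prod.ext_iff]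
    exact ⟨h1, h2⟩
  exact Subtype.coe_injective this


lemma fract_close {Q : ℕ} (hQ : 0 < Q) {x y : ℝ}
    (h : ⌊Int.fract x * Q⌋ = ⌊Int.fract y * Q⌋) :
    |Int.fract x - Int.fract y| < 1 / Q := by
  have hQR : (0:ℝ) < Q := by exact_mod_cast hQ
  have h2 := Int.abs_sub_lt_one_of_floor_eq_floor h
  rw [lt_div_iff₀ hQR]
  calc |Int.fract x - Int.fract y| * Q
      = |Int.fract x * Q - Int.fract y * Q| := by
        rw [← sub_mul, abs_mul, abs_of_pos hQR]
    _ < 1 := h2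

lemma fract_floor_mem {Q : ℕ} (hQ : 0 < Q) (x : ℝ) :
    ⌊Int.fract x * Q⌋ ∈ Finset.Ico (0:ℤ) Q := by
  have hQR : (0:ℝ) < Q := by exact_mod_cast hQ
  simp only [Finset.mem_Ico]
  constructor
  · exact Int.floor_nonneg.mpr (mul_nonneg (Int.fract_nonneg _) hQR.le)
  · exact Int.floor_lt.mpr (by
      calc Int.fract x * Q < 1 * Q :=
            mul_lt_mul_of_pos_right (Int.fract_lt_one _) hQR
        _ = ((Q:ℤ):ℝ) := by push_cast; ring)

lemma diff_close {Q : ℕ} (hQ : 0 < Q) {u : ℝ} {j₁ j₂ : ℕ} (hlt : j₁ < j₂)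
    (h : ⌊Int.fract ((j₁:ℝ) * u) * Q⌋ = ⌊Int.fract ((j₂:ℝ) * u) * Q⌋) :
    |((j₂ - j₁ : ℕ) : ℝ) * u + ((⌊(j₁:ℝ) * u⌋ - ⌊(j₂:ℝ) * u⌋ : ℤ) : ℝ)| ≤ 1 / Q := by
  have h3 := fract_close hQ h.symm
  have hcast : ((j₂ - j₁ : ℕ) : ℝ) * u + ((⌊(j₁:ℝ) * u⌋ - ⌊(j₂:ℝ) * u⌋ : ℤ) : ℝ)
      = Int.fract ((j₂:ℝ) * u) - Int.fract ((j₁:ℝ) * u) := by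
    have hc : ((j₂ - j₁ : ℕ) : ℝ) = (j₂ : ℝ) - (j₁ : ℝ) := by
      push_cast [Nat.cast_sub hlt.le]; ring
    rw [hc]
    simp only [Int.fract]
    push_cast
    ring
  rw [hcast]; exact h3.le

lemma simul_approx (s t : ℝ) {Q : ℕ} (hQ : 0 < Q) :
    ∃ q : ℕ, ∃ m n : ℤ, 0 < q ∧ q ≤ Q ^ 2 ∧
      |(q:ℝ) * s + (m:ℝ)| ≤ 1 / Q ∧ |(q:ℝ) * t + (n:ℝ)| ≤ 1 / Q := by
  set f : ℕ → ℤ × ℤ := fun j =>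
    (⌊Int.fract (j * s) * Q⌋, ⌊Int.fract (j * t) * Q⌋) with hf
  have hmaps : ∀ j ∈ Finset.range (Q ^ 2 + 1),
      f j ∈ Finset.Ico (0:ℤ) Q ×ˢ Finset.Ico (0:ℤ) Q := by
    intro j _
    simp only [hf, Finset.mem_product]
    exact ⟨fract_floor_mem hQ _, fract_floor_mem hQ _⟩
  have hcard : (Finset.Ico (0:ℤ) Q ×ˢ Finset.Ico (0:ℤ) Q).card
      < (Finset.range (Q ^ 2 + 1)).card := by
    rw [Finset.card_product, Finset.card_range, Int.card_Ico]
    simp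
    nlinarith
  obtain ⟨j₁, hj₁, j₂, hj₂, hne, heq⟩ :=
    Finset.exists_ne_map_eq_of_card_lt_of_maps_to hcard hmaps
  simp only [Finset.mem_range] at hj₁ hj₂
  have heq1 : ⌊Int.fract ((j₁:ℝ) * s) * Q⌋ = ⌊Int.fract ((j₂:ℝ) * s) * Q⌋ := by
    have := congrArg Prod.fst heq; simpa [hf] using this
  have heq2 : ⌊Int.fract ((j₁:ℝ) * t) * Q⌋ = ⌊Int.fract ((j₂:ℝ) * t) * Q⌋ := by
    have := congrArg Prod.snd heq; simpa [hf] using this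
  rcases lt_or_gt_of_ne hne with hlt | hlt
  · exact ⟨j₂ - j₁, ⌊(j₁:ℝ) * s⌋ - ⌊(j₂:ℝ) * s⌋, ⌊(j₁:ℝ) * t⌋ - ⌊(j₂:ℝ) * t⌋,
      by omega, by omega, diff_close hQ hlt heq1, diff_close hQ hlt heq2⟩
  · exact ⟨j₁ - j₂, ⌊(j₂:ℝ) * s⌋ - ⌊(j₁:ℝ) * s⌋, ⌊(j₂:ℝ) * t⌋ - ⌊(j₁:ℝ) * t⌋,
      by omega, by omega, diff_close hQ hlt heq1.symm, diff_close hQ hlt heq2.symm⟩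


lemma x1_from_s (hk1 : 1 < k) (p : Pt) : x1 p = s1 k p + s2 k p * omg k := by
  have h := omg_sub_pos (k := k) hk1
  have h1 : omg k - omg' k ≠ 0 := h.ne'
  have h2 : omg' k - omg k ≠ 0 := by intro hx; apply h1; linarith
  unfold s1 s2
  field_simp
  ring

lemma x2_from_s (hk1 : 1 < k) (p : Pt) : x2 p = s1 k p + s2 k p * omg' k := by
  have h := omg_sub_pos (k := k) hk1
  have h1 : omg k - omg' k ≠ 0 := h.ne'
  have h2 : omg' k - omg k ≠ 0 := by intro hx; apply h1; linarith
  unfold s1 s2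
  field_simp
  ring

lemma HNorm_smul (g c d : ℝ × ℝ) (p : Pt) :
    HNorm (g * c) (g * d) p = (g.1 * g.2) ^ 2 * HNorm c d p := by
  simp only [HNorm, Prod.fst_mul, Prod.snd_mul]
  ring

lemma sq_le_quarter {a : ℝ} (h : |a| ≤ 1 / 2) : a ^ 2 ≤ 1 / 4 := by
  nlinarith [abs_nonneg a, sq_abs a]

lemma HNorm_nonneg (c d : ℝ × ℝ) (p : Pt) : 0 ≤ HNorm c d p :=
  mul_nonneg (by positivity) (by positivity)

set_option maxHeartbeats 1000000 in
/-- The crux: on `F₀`-like points with bounded ratio, the height `h = y₁y₂` is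
bounded below. -/
lemma hh_lower (hk : Squarefree k) (hk1 : 1 < k) (hPID : IsPrincipalIdealRing (R k))
    {E : ℝ} (hE : 1 ≤ E) :
    ∃ δ : ℝ, 0 < δ ∧ ∀ p : Pt, 0 < y1 p → 0 < y2 p →
      (∀ ab ∈ Spairs k, 1 ≤ HNorm (ab.1 : ℝ × ℝ) (ab.2 : ℝ × ℝ) p) →
      y1 p ^ 2 ≤ E * hh p → y2 p ^ 2 ≤ E * hh p → δ ≤ hh p := by
  have homg := one_lt_omg (k := k) hk1
  set C : ℝ := 1 + omg k with hCdef
  have hC : 0 < C := by simp only [hCdef]; linarith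
  obtain ⟨Q, hQpos, hQC⟩ : ∃ Q : ℕ, 0 < Q ∧ 2 * C ≤ (Q:ℝ) :=
    ⟨⌈2 * C⌉₊ + 1, Nat.succ_pos _, by push_cast; linarith [Nat.le_ceil (2 * C)]⟩
  have hQR : (0:ℝ) < Q := by exact_mod_cast hQpos
  have hEpos : (0:ℝ) < E := by linarith
  refine ⟨1 / (4 * (Q:ℝ) ^ 4 * E), by positivity, ?_⟩
  intro p hy1 hy2 hF0 hr1 hr2
  by_contra hcon
  push_neg at hcon
  have hhpos : 0 < hh p := mul_pos hy1 hy2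
  obtain ⟨q, m, n, hq0, hqQ, ha1, ha2⟩ := simul_approx (s1 k p) (s2 k p) hQpos
  set cc : R k := ((q : ℕ) : R k) with hccdef
  set dd : R k := (m : R k) + (n : R k) * omR k with hdddef
  have hccv : ((cc : ℝ × ℝ)) = ((q:ℝ), (q:ℝ)) := by
    simp only [hccdef]; push_cast; rfl
  have hddv : ((dd : ℝ × ℝ)) = ((m:ℝ) + (n:ℝ) * omg k, (m:ℝ) + (n:ℝ) * omg' k) := by
    simp only [hdddef]; push_cast; rfl
  have hcc0 : cc ≠ 0 := by
    intro h
    have h2 : ((cc : ℝ × ℝ)) = 0 := by rw [h]; rfl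
    rw [hccv] at h2
    have := congrArg Prod.fst h2
    simp at this
    omega
  -- bounds on the two linear factors
  have hqr : (0:ℝ) < q := by exact_mod_cast hq0
  have habs1 : |(q:ℝ) * x1 p + ((m:ℝ) + (n:ℝ) * omg k)| ≤ C / Q := by
    have hx := x1_from_s hk1 p
    have heq : (q:ℝ) * x1 p + ((m:ℝ) + (n:ℝ) * omg k)
        = ((q:ℝ) * s1 k p + m) + ((q:ℝ) * s2 k p + n) * omg k := by
      rw [hx]; ring
    rw [heq]
    calc |((q:ℝ) * s1 k p + m) + ((q:ℝ) * s2 k p + n) * omg k|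
        ≤ |(q:ℝ) * s1 k p + m| + |((q:ℝ) * s2 k p + n) * omg k| := abs_add_le _ _
      _ = |(q:ℝ) * s1 k p + m| + |(q:ℝ) * s2 k p + n| * omg k := by
          rw [abs_mul, abs_of_pos (by linarith : (0:ℝ) < omg k)]
      _ ≤ 1 / Q + (1 / Q) * omg k := by
          have := mul_le_mul_of_nonneg_right ha2 (by linarith : (0:ℝ) ≤ omg k)
          linarith [ha1]
      _ = C / Q := by rw [hCdef]; field_simp
  have habs2 : |(q:ℝ) * x2 p + ((m:ℝ) + (n:ℝ) * omg' k)| ≤ C / Q := by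
    have hx := x2_from_s hk1 p
    have heq : (q:ℝ) * x2 p + ((m:ℝ) + (n:ℝ) * omg' k)
        = ((q:ℝ) * s1 k p + m) + ((q:ℝ) * s2 k p + n) * omg' k := by
      rw [hx]; ring
    rw [heq]
    have homg' : |omg' k| ≤ omg k := by
      rw [abs_of_neg (omg'_neg hk1)]
      exact (neg_omg'_lt_omg hk1).le
    calc |((q:ℝ) * s1 k p + m) + ((q:ℝ) * s2 k p + n) * omg' k|
        ≤ |(q:ℝ) * s1 k p + m| + |((q:ℝ) * s2 k p + n) * omg' k| := abs_add_le _ _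
      _ = |(q:ℝ) * s1 k p + m| + |(q:ℝ) * s2 k p + n| * |omg' k| := by rw [abs_mul]
      _ ≤ 1 / Q + (1 / Q) * omg k := by
          have h1 : |(q:ℝ) * s2 k p + n| * |omg' k| ≤ (1/Q) * omg k := by
            apply mul_le_mul ha2 homg' (abs_nonneg _) (by positivity)
          linarith [ha1]
      _ = C / Q := by rw [hCdef]; field_simp
  have hCQ : C / Q ≤ 1 / 2 := by
    rw [div_le_div_iff₀ hQR (by norm_num)]
    linarith
  have hsq1 : ((q:ℝ) * x1 p + ((m:ℝ) + (n:ℝ) * omg k)) ^ 2 ≤ 1 / 4 :=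
    sq_le_quarter (habs1.trans hCQ)
  have hsq2 : ((q:ℝ) * x2 p + ((m:ℝ) + (n:ℝ) * omg' k)) ^ 2 ≤ 1 / 4 :=
    sq_le_quarter (habs2.trans hCQ)
  have hqQ2 : (q:ℝ) ^ 2 ≤ (Q:ℝ) ^ 4 := by
    have : (q:ℝ) ≤ (Q:ℝ) ^ 2 := by exact_mod_cast hqQ
    nlinarith [hqr.le]
  have hy1b : (q:ℝ) ^ 2 * y1 p ^ 2 ≤ 1 / 4 := by
    have h1 : (q:ℝ) ^ 2 * y1 p ^ 2 ≤ (Q:ℝ) ^ 4 * (E * hh p) := by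
      have := mul_le_mul hqQ2 hr1 (by positivity) (by positivity)
      linarith
    have h2 : (Q:ℝ) ^ 4 * (E * hh p) < (Q:ℝ) ^ 4 * (E * (1 / (4 * (Q:ℝ) ^ 4 * E))) := by
      apply mul_lt_mul_of_pos_left _ (by positivity)
      exact mul_lt_mul_of_pos_left hcon hEpos
    have h3 : (Q:ℝ) ^ 4 * (E * (1 / (4 * (Q:ℝ) ^ 4 * E))) = 1 / 4 := by
      field_simp
    linarith
  have hy2b : (q:ℝ) ^ 2 * y2 p ^ 2 ≤ 1 / 4 := by
    have h1 : (q:ℝ) ^ 2 * y2 p ^ 2 ≤ (Q:ℝ) ^ 4 * (E * hh p) := by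
      have := mul_le_mul hqQ2 hr2 (by positivity) (by positivity)
      linarith
    have h2 : (Q:ℝ) ^ 4 * (E * hh p) < (Q:ℝ) ^ 4 * (E * (1 / (4 * (Q:ℝ) ^ 4 * E))) := by
      apply mul_lt_mul_of_pos_left _ (by positivity)
      exact mul_lt_mul_of_pos_left hcon hEpos
    have h3 : (Q:ℝ) ^ 4 * (E * (1 / (4 * (Q:ℝ) ^ 4 * E))) = 1 / 4 := by
      field_simp
    linarith
  have hHsmall : HNorm (cc : ℝ × ℝ) (dd : ℝ × ℝ) p ≤ 1 / 4 := by
    rw [hccv, hddv]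
    simp only [HNorm]
    have f1 : ((q:ℝ) * x1 p + ((m:ℝ) + (n:ℝ) * omg k)) ^ 2 + (q:ℝ) ^ 2 * y1 p ^ 2
        ≤ 1 / 2 := by linarith
    have f2 : ((q:ℝ) * x2 p + ((m:ℝ) + (n:ℝ) * omg' k)) ^ 2 + (q:ℝ) ^ 2 * y2 p ^ 2
        ≤ 1 / 2 := by linarith
    have f1n : 0 ≤ ((q:ℝ) * x1 p + ((m:ℝ) + (n:ℝ) * omg k)) ^ 2 + (q:ℝ) ^ 2 * y1 p ^ 2 := by
      positivity
    have f2n : 0 ≤ ((q:ℝ) * x2 p + ((m:ℝ) + (n:ℝ) * omg' k)) ^ 2 + (q:ℝ) ^ 2 * y2 p ^ 2 := by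
      positivity
    calc _ ≤ (1/2 : ℝ) * (1/2 : ℝ) := mul_le_mul f1 f2 f2n (by norm_num)
      _ = 1 / 4 := by norm_num
  -- reduce to a unimodular pair
  obtain ⟨g, c₀, d₀, hg0, hcg, hdg, hspan⟩ := exists_unimodular hk hk1 hPID cc dd hcc0
  have hmem : ((c₀, d₀) : R k × R k) ∈ Spairs k := hspan
  have hF1 : 1 ≤ HNorm (c₀ : ℝ × ℝ) (d₀ : ℝ × ℝ) p := hF0 (c₀, d₀) hmem
  have hgcoe : ((g : ℝ × ℝ)) ≠ 0 := by simpa using Subtype.coe_injective.ne_iff.mpr hg0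
  have hgN : 1 ≤ ((g : ℝ × ℝ).1 * (g : ℝ × ℝ).2) ^ 2 := norm_sq_ge_one hk hk1 g.2 hgcoe
  have hccg : ((cc : ℝ × ℝ)) = (g : ℝ × ℝ) * (c₀ : ℝ × ℝ) := by
    rw [hcg]; push_cast; rfl
  have hddg : ((dd : ℝ × ℝ)) = (g : ℝ × ℝ) * (d₀ : ℝ × ℝ) := by
    rw [hdg]; push_cast; rfl
  have hbig : 1 ≤ HNorm (cc : ℝ × ℝ) (dd : ℝ × ℝ) p := by
    rw [hccg, hddg, HNorm_smul]
    calc (1:ℝ) = 1 * 1 := by norm_num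
      _ ≤ ((g:ℝ×ℝ).1 * (g:ℝ×ℝ).2) ^ 2 * HNorm (c₀ : ℝ × ℝ) (d₀ : ℝ × ℝ) p :=
        mul_le_mul hgN hF1 (by norm_num) (by positivity)
  linarith


lemma cont_x1 : Continuous x1 := continuous_fst
lemma cont_x2 : Continuous x2 := continuous_fst.comp continuous_snd
lemma cont_y1 : Continuous y1 :=
  continuous_fst.comp (continuous_snd.comp continuous_snd)
lemma cont_y2 : Continuous y2 :=
  continuous_snd.comp (continuous_snd.comp continuous_snd)

lemma cont_s1 (k : ℕ) : Continuous (s1 k) := by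
  unfold s1
  exact ((continuous_const.mul cont_x1).sub (continuous_const.mul cont_x2)).div_const _

lemma cont_s2 (k : ℕ) : Continuous (s2 k) := by
  unfold s2
  exact (cont_x1.sub cont_x2).div_const _

lemma cont_HNorm (a b : ℝ × ℝ) : Continuous (HNorm a b) := by
  unfold HNorm
  exact (((((continuous_const.mul cont_x1).add continuous_const).pow 2).add
      (continuous_const.mul (cont_y1.pow 2)))).mul
    (((((continuous_const.mul cont_x2).add continuous_const).pow 2).add
      (continuous_const.mul (cont_y2.pow 2))))


end AuxProofs

set_option maxHeartbeats 2000000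

/-- Assume `R` is a principal ideal domain and let `(c,d) ∈ S` with
`c ≠ 0`. Then `V_{c,d} ∩ F` is compact. -/
theorem Veq_inter_F_isCompact (k : ℕ) (hk : Squarefree k) (hk1 : 1 < k)
    (e : (R k)ˣ) (he : IsFundUnit k e) (hPID : IsPrincipalIdealRing (R k))
    (cd : R k × R k) (hcd : cd ∈ Spairs k) (hc : cd.1 ≠ 0) :
    IsCompact (Veq k cd ∩ F k (eps k e)) := by
  set ε : ℝ := eps k e with hεdef
  have hε : 1 < ε := he.1
  have hε2 : (1:ℝ) ≤ ε ^ 2 := by nlinarith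
  have hε2pos : (0:ℝ) < ε ^ 2 := by nlinarith
  obtain ⟨δ, hδ, hδle⟩ := hh_lower (E := ε ^ 2) hk hk1 hPID hε2
  have homg := one_lt_omg (k := k) hk1
  have homg' := omg'_neg (k := k) hk1
  have homg'' := neg_omg'_lt_omg (k := k) hk1
  -- coordinates of c are nonzero
  have hccoe : ((cd.1 : ℝ × ℝ)) ≠ 0 := by
    simpa using Subtype.coe_injective.ne_iff.mpr hc
  obtain ⟨hc1, hc2⟩ := coords_ne_zero hk hk1 cd.1.2 hccoe
  set c1 : ℝ := (cd.1 : ℝ × ℝ).1 with hc1def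
  set c2 : ℝ := (cd.1 : ℝ × ℝ).2 with hc2def
  have hc12 : 0 < |c1| * |c2| := mul_pos (abs_pos.mpr hc1) (abs_pos.mpr hc2)
  set Hm : ℝ := 1 / (|c1| * |c2|) with hHmdef
  have hHm : 0 < Hm := by positivity
  set B : ℝ := (1 + omg k) / 2 with hBdef
  set Y : ℝ := Real.sqrt (ε ^ 2 * Hm) with hYdef
  set δy : ℝ := Real.sqrt (δ / ε ^ 2) with hδydef
  have hδy : 0 < δy := Real.sqrt_pos.mpr (by positivity)
  set T : Set Pt :=
    ({p : Pt | |s1 k p| ≤ 1 / 2} ∩ {p : Pt | |s2 k p| ≤ 1 / 2} ∩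
      {p : Pt | y1 p ≤ ε ^ 2 * y2 p} ∩ {p : Pt | y2 p ≤ ε ^ 2 * y1 p} ∩
      {p : Pt | δy ≤ y1 p} ∩ {p : Pt | δy ≤ y2 p} ∩
      {p : Pt | HNorm (cd.1 : ℝ × ℝ) (cd.2 : ℝ × ℝ) p = 1}) ∩
      ⋂ ab ∈ Spairs k, {p : Pt | 1 ≤ HNorm (ab.1 : ℝ × ℝ) (ab.2 : ℝ × ℝ) p} with hTdef
  have hTclosed : IsClosed T := by
    refine IsClosed.inter ?_ ?_
    · refine (((((((isClosed_le (cont_s1 k).abs continuous_const).inter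
        (isClosed_le (cont_s2 k).abs continuous_const)).inter
        (isClosed_le cont_y1 (continuous_const.mul cont_y2))).inter
        (isClosed_le cont_y2 (continuous_const.mul cont_y1))).inter
        (isClosed_le continuous_const cont_y1)).inter
        (isClosed_le continuous_const cont_y2)).inter
        (isClosed_eq (cont_HNorm _ _) continuous_const))
    · exact isClosed_biInter fun ab _ => isClosed_le continuous_const (cont_HNorm _ _)
  have hTset : Veq k cd ∩ F k ε = T := by
    ext p
    constructor
    · rintro ⟨⟨hHH, hHN⟩, ⟨_, hs1, hs2, hrlo, hrhi⟩, ⟨_, hall⟩⟩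
      obtain ⟨hy1, hy2⟩ := hHH
      unfold rr at hrlo hrhi
      have h3 : y1 p ≤ ε ^ 2 * y2 p := (div_le_iff₀ hy2).mp hrhi
      have h4 : y2 p ≤ ε ^ 2 * y1 p := by
        have h := (le_div_iff₀ hy2).mp hrlo
        have := mul_le_mul_of_nonneg_left h hε2pos.le
        rw [← mul_assoc, mul_inv_cancel₀ hε2pos.ne', one_mul] at this
        linarith
      have hE1 : y1 p ^ 2 ≤ ε ^ 2 * hh p := by
        unfold hh; nlinarith [hy1.le]
      have hE2 : y2 p ^ 2 ≤ ε ^ 2 * hh p := by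
        unfold hh; nlinarith [hy2.le]
      have hδh : δ ≤ hh p := hδle p hy1 hy2 hall hE1 hE2
      have h5 : δy ≤ y1 p := by
        rw [hδydef]
        have hy1sq : δ / ε ^ 2 ≤ y1 p ^ 2 := by
          rw [div_le_iff₀ hε2pos]
          unfold hh at hδh; nlinarith
        calc Real.sqrt (δ / ε ^ 2) ≤ Real.sqrt (y1 p ^ 2) := Real.sqrt_le_sqrt hy1sq
          _ = y1 p := Real.sqrt_sq hy1.le
      have h6 : δy ≤ y2 p := by
        rw [hδydef]
        have hy2sq : δ / ε ^ 2 ≤ y2 p ^ 2 := by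
          rw [div_le_iff₀ hε2pos]
          unfold hh at hδh; nlinarith
        calc Real.sqrt (δ / ε ^ 2) ≤ Real.sqrt (y2 p ^ 2) := Real.sqrt_le_sqrt hy2sq
          _ = y2 p := Real.sqrt_sq hy2.le
      refine ⟨⟨⟨⟨⟨⟨⟨hs1, hs2⟩, h3⟩, h4⟩, h5⟩, h6⟩, hHN⟩, ?_⟩
      simp only [Set.mem_iInter, Set.mem_setOf_eq]
      exact fun ab hab => hall ab hab
    · rintro ⟨⟨⟨⟨⟨⟨⟨hs1, hs2⟩, h3⟩, h4⟩, h5⟩, h6⟩, hHN⟩, hInter⟩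
      simp only [Set.mem_setOf_eq] at hs1 hs2 h3 h4 h5 h6 hHN
      have hy1 : 0 < y1 p := lt_of_lt_of_le hδy h5
      have hy2 : 0 < y2 p := lt_of_lt_of_le hδy h6
      have hHH : p ∈ HH := ⟨hy1, hy2⟩
      have hall : ∀ ab ∈ Spairs k, 1 ≤ HNorm (ab.1 : ℝ × ℝ) (ab.2 : ℝ × ℝ) p := by
        simp only [Set.mem_iInter, Set.mem_setOf_eq] at hInter
        exact hInter
      have hrhi : rr p ≤ ε ^ 2 := by
        unfold rr
        rw [div_le_iff₀ hy2]
        linarith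
      have hrlo : (ε ^ 2)⁻¹ ≤ rr p := by
        unfold rr
        rw [le_div_iff₀ hy2]
        have := mul_le_mul_of_nonneg_left h4 (inv_nonneg.mpr hε2pos.le)
        rw [← mul_assoc, inv_mul_cancel₀ hε2pos.ne', one_mul] at this
        linarith
      exact ⟨⟨hHH, hHN⟩, ⟨hHH, hs1, hs2, hrlo, hrhi⟩, ⟨hHH, hall⟩⟩
  set K : Set Pt := Set.Icc (-B) B ×ˢ (Set.Icc (-B) B ×ˢ
    (Set.Icc (-Y) Y ×ˢ Set.Icc (-Y) Y)) with hKdef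
  have hKcompact : IsCompact K :=
    isCompact_Icc.prod (isCompact_Icc.prod (isCompact_Icc.prod isCompact_Icc))
  have hTK : T ⊆ K := by
    rintro p ⟨⟨⟨⟨⟨⟨⟨hs1b, hs2b⟩, h3⟩, h4⟩, h5⟩, h6⟩, hHN⟩, _⟩
    simp only [Set.mem_setOf_eq] at hs1b hs2b h3 h4 h5 h6 hHN
    have hy1 : 0 < y1 p := lt_of_lt_of_le hδy h5
    have hy2 : 0 < y2 p := lt_of_lt_of_le hδy h6
    -- bound on x coordinates
    have habs1 := abs_le.mp hs1b
    have habs2 := abs_le.mp hs2b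
    have hx1B : -B ≤ x1 p ∧ x1 p ≤ B := by
      rw [x1_from_s hk1 p, hBdef]
      constructor <;> nlinarith [habs1.1, habs1.2, habs2.1, habs2.2]
    have hx2B : -B ≤ x2 p ∧ x2 p ≤ B := by
      rw [x2_from_s hk1 p, hBdef]
      constructor <;> nlinarith [habs1.1, habs1.2, habs2.1, habs2.2]
    -- bound on y coordinates
    have hprod : (c1 * c2 * y1 p * y2 p) ^ 2 ≤ 1 := by
      have hexp : HNorm (cd.1 : ℝ × ℝ) (cd.2 : ℝ × ℝ) p
          = ((c1 * x1 p + (cd.2 : ℝ × ℝ).1) ^ 2 + c1 ^ 2 * y1 p ^ 2) *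
            ((c2 * x2 p + (cd.2 : ℝ × ℝ).2) ^ 2 + c2 ^ 2 * y2 p ^ 2) := rfl
      rw [hexp] at hHN
      nlinarith [sq_nonneg (c1 * x1 p + (cd.2 : ℝ × ℝ).1),
        sq_nonneg (c2 * x2 p + (cd.2 : ℝ × ℝ).2),
        sq_nonneg (c1 * y1 p), sq_nonneg (c2 * y2 p),
        mul_nonneg (sq_nonneg (c1 * x1 p + (cd.2 : ℝ × ℝ).1))
          (sq_nonneg (c2 * x2 p + (cd.2 : ℝ × ℝ).2)),
        mul_nonneg (sq_nonneg (c1 * x1 p + (cd.2 : ℝ × ℝ).1)) (sq_nonneg (c2 * y2 p)),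
        mul_nonneg (sq_nonneg (c1 * y1 p)) (sq_nonneg (c2 * x2 p + (cd.2 : ℝ × ℝ).2))]
    have hhb : hh p ≤ Hm := by
      have h1 : |c1 * c2 * y1 p * y2 p| ≤ 1 := (sq_le_one_iff_abs_le_one _).mp hprod
      have h2 : |c1| * |c2| * (y1 p * y2 p) ≤ 1 := by
        have : |c1 * c2 * y1 p * y2 p| = |c1| * |c2| * (y1 p * y2 p) := by
          rw [abs_mul, abs_mul, abs_mul, abs_of_pos hy1, abs_of_pos hy2]
          ring
        linarith [this ▸ h1]
      rw [hHmdef, le_div_iff₀ hc12]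
      unfold hh
      linarith
    have hy1Y : y1 p ≤ Y := by
      rw [hYdef]
      rw [Real.le_sqrt hy1.le (by positivity)]
      have : y1 p ^ 2 ≤ ε ^ 2 * hh p := by unfold hh; nlinarith [hy1.le]
      have h2 : ε ^ 2 * hh p ≤ ε ^ 2 * Hm := by nlinarith
      linarith
    have hy2Y : y2 p ≤ Y := by
      rw [hYdef]
      rw [Real.le_sqrt hy2.le (by positivity)]
      have : y2 p ^ 2 ≤ ε ^ 2 * hh p := by unfold hh; nlinarith [hy2.le]
      have h2 : ε ^ 2 * hh p ≤ ε ^ 2 * Hm := by nlinarith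
      linarith
    have hY0 : 0 ≤ Y := Real.sqrt_nonneg _
    refine ⟨⟨hx1B.1, hx1B.2⟩, ⟨hx2B.1, hx2B.2⟩,
      ⟨show -Y ≤ y1 p by linarith, hy1Y⟩, ⟨show -Y ≤ y2 p by linarith, hy2Y⟩⟩
  rw [hTset]
  exact IsCompact.of_isClosed_subset hKcompact hTclosed hTK


end Hilbert
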